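/- Let M = (S, A, r, P, γ) be a finite discounted MDP and π : S → A a policy such that the induced kernel P_π satisfies the (m,p)-Doeblin condition with m/p ≤ 1/(1−γ). Then the variance of the discounted cumulative reward satisfies Ψ^π(s,a) ≤ 20 (m/p)/(1−γ) for every (s,a) ∈ S × A. -/

import Mathlib

open MeasureTheory ProbabilityTheory Matrix
set_option linter.unusedSectionVars false

section Aux
variable {S : Type*} [Fintype S] [DecidableEq S] [MeasurableSpace S] [MeasurableSingletonClass S]

def extw (n : ℕ) (w : Fin (n + 1) → S) : ℕ → S :=
  fun i => w ⟨min i n, Nat.lt_succ_of_le (min_le_right i n)⟩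

lemma extw_eq {n : ℕ} (w : Fin (n + 1) → S) {i : ℕ} (hi : i ≤ n) :
    extw n w i = w ⟨i, Nat.lt_succ_of_le hi⟩ := by
  simp [extw, min_eq_left hi]


lemma extw_restrict (n : ℕ) (ω : ℕ → S) {i : ℕ} (hi : i ≤ n) :
    extw n (fun j : Fin (n+1) => ω j) i = ω i := by
  rw [extw_eq _ hi]

lemma integral_eq_sum (μ : Measure (ℕ → S)) [IsProbabilityMeasure μ] (n : ℕ)
    (G : (ℕ → S) → ℝ) (hGm : Measurable G)
    (hGd : ∀ ω ω' : ℕ → S, (∀ i ≤ n, ω i = ω' i) → G ω = G ω') :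
    ∫ ω, G ω ∂μ =
      ∑ w : Fin (n + 1) → S, (μ {ω | ∀ i ≤ n, ω i = extw n w i}).toReal * G (extw n w) := by
  set B : (Fin (n + 1) → S) → Set (ℕ → S) := fun w => {ω | ∀ i ≤ n, ω i = extw n w i} with hB
  have hBm : ∀ w, MeasurableSet (B w) := by
    intro w
    have : B w = ⋂ i ∈ {i : ℕ | i ≤ n}, (fun ω : ℕ → S => ω i) ⁻¹' {extw n w i} := by
      ext ω; simp [hB, Set.mem_iInter]
    rw [this]
    exact MeasurableSet.biInter (Set.to_countable _)
      (fun i _ => (measurable_pi_apply i) (measurableSet_singleton _))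
  have hdisj : Pairwise (Function.onFun Disjoint B) := by
    intro w w' hww'
    refine Set.disjoint_left.mpr fun ω hω hω' => hww' ?_
    funext i
    have h1 := hω i.val (Nat.lt_succ_iff.mp i.isLt)
    have h2 := hω' i.val (Nat.lt_succ_iff.mp i.isLt)
    rw [extw_eq _ (Nat.lt_succ_iff.mp i.isLt)] at h1 h2
    rw [← Fin.eta i i.isLt, ← h1, ← h2]
  have hcover : ⋃ w, B w = Set.univ := by
    refine Set.eq_univ_of_forall fun ω => Set.mem_iUnion.mpr ?_
    exact ⟨fun j : Fin (n+1) => ω j, fun i hi => (extw_restrict n ω hi).symm⟩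
  have hbound : ∀ ω, ‖G ω‖ ≤ ∑ w : Fin (n + 1) → S, |G (extw n w)| := by
    intro ω
    have : G ω = G (extw n (fun j : Fin (n+1) => ω j)) :=
      hGd _ _ (fun i hi => (extw_restrict n ω hi).symm)
    rw [Real.norm_eq_abs, this]
    exact Finset.single_le_sum (f := fun w => |G (extw n w)|)
      (fun _ _ => abs_nonneg _) (Finset.mem_univ _)
  have hint : Integrable G μ :=
    (integrable_const _).mono' hGm.aestronglyMeasurable (Filter.Eventually.of_forall hbound)
  calc ∫ ω, G ω ∂μ = ∫ ω in ⋃ w, B w, G ω ∂μ := by rw [hcover, setIntegral_univ]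
    _ = ∑' w, ∫ ω in B w, G ω ∂μ :=
        integral_iUnion hBm hdisj (by rw [hcover]; exact hint.integrableOn)
    _ = ∑ w, ∫ ω in B w, G ω ∂μ := tsum_fintype _
    _ = ∑ w, (μ (B w)).toReal * G (extw n w) := by
        refine Finset.sum_congr rfl fun w _ => ?_
        rw [setIntegral_congr_fun (hBm w) (fun ω hω => hGd ω _ hω), setIntegral_const,
          smul_eq_mul]; rfl

/-- cylinder weight -/
def cwt (s : S) (d : S → ℝ) (Q : S → S → ℝ) (n : ℕ) (w : ℕ → S) : ℝ :=
  (if w 0 = s then (1 : ℝ) else 0) * d (w 1) * ∏ k ∈ Finset.Ico 1 n, Q (w k) (w (k + 1))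

lemma cwt_nonneg (s : S) {d : S → ℝ} {Q : S → S → ℝ} (hd : ∀ x, 0 ≤ d x)
    (hQ : ∀ x y, 0 ≤ Q x y) (n : ℕ) (w : ℕ → S) : 0 ≤ cwt s d Q n w := by
  refine mul_nonneg (mul_nonneg ?_ (hd _)) (Finset.prod_nonneg fun k _ => hQ _ _)
  split <;> norm_num

lemma extw_snoc_le {n : ℕ} (w : Fin (n + 1) → S) (y : S) {i : ℕ} (hi : i ≤ n) :
    extw (n + 1) (Fin.snoc w y) i = extw n w i := by
  rw [extw_eq _ (le_trans hi (Nat.le_succ n)), extw_eq _ hi]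
  have h : (⟨i, Nat.lt_succ_of_le (le_trans hi (Nat.le_succ n))⟩ : Fin (n + 2)) =
      Fin.castSucc ⟨i, Nat.lt_succ_of_le hi⟩ := by ext; simp
  rw [h, Fin.snoc_castSucc]

lemma extw_snoc_last {n : ℕ} (w : Fin (n + 1) → S) (y : S) :
    extw (n + 1) (Fin.snoc w y) (n + 1) = y := by
  rw [extw_eq _ le_rfl]
  have h : (⟨n + 1, Nat.lt_succ_of_le le_rfl⟩ : Fin (n + 2)) = Fin.last (n + 1) := by
    ext; simp [Fin.last]
  rw [h, Fin.snoc_last]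

/-- the snoc equivalence -/
def snocE (n : ℕ) : ((Fin (n + 1) → S) × S) ≃ (Fin (n + 2) → S) where
  toFun := fun uy => Fin.snoc uy.1 uy.2
  invFun := fun w => (Fin.init w, w (Fin.last _))
  left_inv := fun ⟨u, y⟩ => by simp [Fin.init_snoc, Fin.snoc_last]
  right_inv := fun w => Fin.snoc_init_self w

lemma cwt_snoc (s : S) (d : S → ℝ) (Q : S → S → ℝ) {n : ℕ} (hn : 1 ≤ n)
    (w : Fin (n + 1) → S) (y : S) :
    cwt s d Q (n + 1) (extw (n + 1) (Fin.snoc w y)) =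
      cwt s d Q n (extw n w) * Q (extw n w n) y := by
  unfold cwt
  rw [Finset.prod_Ico_succ_top hn]
  rw [extw_snoc_le w y (Nat.zero_le n), extw_snoc_le w y hn, extw_snoc_le w y le_rfl,
    extw_snoc_last w y]
  have hprod : ∏ k ∈ Finset.Ico 1 n, Q (extw (n+1) (Fin.snoc w y) k)
      (extw (n+1) (Fin.snoc w y) (k+1)) =
      ∏ k ∈ Finset.Ico 1 n, Q (extw n w k) (extw n w (k+1)) := by
    refine Finset.prod_congr rfl fun k hk => ?_
    obtain ⟨hk1, hk2⟩ := Finset.mem_Ico.mp hk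
    rw [extw_snoc_le w y (le_of_lt hk2), extw_snoc_le w y hk2]
  rw [hprod]; ring

/-- one-step marginalization -/
lemma pathsum_succ (s : S) (d : S → ℝ) (Q : S → S → ℝ) {n : ℕ} (hn : 1 ≤ n)
    (F : (ℕ → S) → ℝ) (hF : ∀ ω ω' : ℕ → S, (∀ i ≤ n, ω i = ω' i) → F ω = F ω')
    (g : S → ℝ) :
    ∑ w : Fin (n + 2) → S,
        cwt s d Q (n + 1) (extw (n + 1) w) * (F (extw (n + 1) w) * g (extw (n + 1) w (n + 1)))
      = ∑ w : Fin (n + 1) → S,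
        cwt s d Q n (extw n w) * (F (extw n w) * ∑ y, Q (extw n w n) y * g y) := by
  rw [← Fintype.sum_equiv (snocE n)
    (fun uy : (Fin (n + 1) → S) × S =>
      cwt s d Q (n + 1) (extw (n + 1) (Fin.snoc uy.1 uy.2)) *
        (F (extw (n + 1) (Fin.snoc uy.1 uy.2)) *
          g (extw (n + 1) (Fin.snoc uy.1 uy.2) (n + 1))))
    (fun w => cwt s d Q (n + 1) (extw (n + 1) w) *
      (F (extw (n + 1) w) * g (extw (n + 1) w (n + 1))))
    (fun uy => rfl)]
  rw [Fintype.sum_prod_type]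
  refine Finset.sum_congr rfl fun w _ => ?_
  have hFw : ∀ y : S, F (extw (n + 1) (Fin.snoc w y)) = F (extw n w) := fun y =>
    hF _ _ (fun i hi => extw_snoc_le w y hi)
  calc ∑ y : S, cwt s d Q (n + 1) (extw (n + 1) (Fin.snoc w y)) *
        (F (extw (n + 1) (Fin.snoc w y)) * g (extw (n + 1) (Fin.snoc w y) (n + 1)))
      = ∑ y : S, cwt s d Q n (extw n w) * (F (extw n w) * (Q (extw n w n) y * g y)) := by
        refine Finset.sum_congr rfl fun y _ => ?_
        rw [cwt_snoc s d Q hn w y, hFw y, extw_snoc_last w y]; ring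
    _ = cwt s d Q n (extw n w) * (F (extw n w) * ∑ y, Q (extw n w n) y * g y) := by
        simp only [Finset.mul_sum]

lemma pathsum_single (s : S) (d : S → ℝ) (Q : Matrix S S ℝ) :
    ∀ (j : ℕ), 1 ≤ j → ∀ f : S → ℝ,
      ∑ w : Fin (j + 1) → S,
          cwt s d (fun u u' => Q u u') j (extw j w) * f (extw j w j)
        = ∑ y, d y * ((Q ^ (j - 1)) *ᵥ f) y := by
  intro j
  induction j with
  | zero => omega
  | succ j ih =>
    intro _ f
    by_cases hj : 1 ≤ j
    · have hstep := pathsum_succ s d (fun u u' => Q u u') hj (fun _ => (1 : ℝ))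
        (fun _ _ _ => rfl) f
      simp only [one_mul] at hstep
      have hQg : ∀ x : S, (∑ y, Q x y * f y) = (Q *ᵥ f) x := by
        intro x; simp [Matrix.mulVec, dotProduct]
      have hstep2 : ∑ w : Fin (j + 2) → S,
          cwt s d (fun u u' => Q u u') (j + 1) (extw (j+1) w) * f (extw (j+1) w (j+1))
          = ∑ w : Fin (j + 1) → S,
          cwt s d (fun u u' => Q u u') j (extw j w) * (Q *ᵥ f) (extw j w j) := by
        rw [hstep]
        exact Finset.sum_congr rfl fun w _ => by rw [hQg]
      rw [hstep2, ih hj (Q *ᵥ f)]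
      have hmv : ((Q ^ (j - 1)) *ᵥ (Q *ᵥ f)) = (Q ^ (j + 1 - 1)) *ᵥ f := by
        rw [Matrix.mulVec_mulVec, show j + 1 - 1 = (j - 1) + 1 by omega, pow_succ]
      rw [hmv]
    · have hj0 : j = 0 := by omega
      subst hj0
      simp only [pow_zero, Matrix.one_mulVec, Nat.sub_self]
      have hterm : ∀ w : Fin 2 → S,
          cwt s d (fun u u' => Q u u') 1 (extw 1 w) * f (extw 1 w 1)
            = ((if (((piFinTwoEquiv fun _ => S) w).1) = s then (1:ℝ) else 0) *
                d (((piFinTwoEquiv fun _ => S) w).2)) * f (((piFinTwoEquiv fun _ => S) w).2) := by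
        intro w
        unfold cwt
        rw [extw_eq _ (Nat.zero_le 1), extw_eq _ le_rfl]
        simp [piFinTwoEquiv]
        by_cases h : w 0 = s <;> simp [h]
      rw [Fintype.sum_equiv (piFinTwoEquiv fun _ => S)
        (fun w : Fin 2 → S => cwt s d (fun u u' => Q u u') 1 (extw 1 w) * f (extw 1 w 1))
        (fun xy : S × S => ((if xy.1 = s then (1:ℝ) else 0) * d xy.2) * f xy.2) hterm]
      rw [Fintype.sum_prod_type, Finset.sum_comm]
      refine Finset.sum_congr rfl fun y _ => ?_
      have : ∀ x : S, (if x = s then (1:ℝ) else 0) * d y * f y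
          = if x = s then d y * f y else 0 := by
        intro x; split <;> simp
      simp only [this]
      rw [Finset.sum_ite_eq' Finset.univ s (fun _ => d y * f y)]
      simp

lemma pathsum_pair (s : S) (d : S → ℝ) (Q : Matrix S S ℝ) (j : ℕ) (hj : 1 ≤ j) :
    ∀ (k : ℕ), j ≤ k → ∀ f g : S → ℝ,
      ∑ w : Fin (k + 1) → S,
          cwt s d (fun u u' => Q u u') k (extw k w) * (f (extw k w j) * g (extw k w k))
        = ∑ y, d y * ((Q ^ (j - 1)) *ᵥ fun x => f x * ((Q ^ (k - j)) *ᵥ g) x) y := by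
  intro k
  induction k with
  | zero => omega
  | succ k ih =>
    intro hjk f g
    by_cases hk : j ≤ k
    · have hk1 : 1 ≤ k := le_trans hj hk
      have hstep := pathsum_succ s d (fun u u' => Q u u') hk1 (fun ω => f (ω j))
        (fun ω ω' h => by show f (ω j) = f (ω' j); rw [h j hk]) g
      have hQg : ∀ x : S, (∑ y, Q x y * g y) = (Q *ᵥ g) x := by
        intro x; simp [Matrix.mulVec, dotProduct]
      have hstep2 : ∑ w : Fin (k + 2) → S,
          cwt s d (fun u u' => Q u u') (k + 1) (extw (k+1) w) *
            (f (extw (k+1) w j) * g (extw (k+1) w (k+1)))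
          = ∑ w : Fin (k + 1) → S,
          cwt s d (fun u u' => Q u u') k (extw k w) *
            (f (extw k w j) * (Q *ᵥ g) (extw k w k)) := by
        rw [hstep]
        exact Finset.sum_congr rfl fun w _ => by rw [hQg]
      rw [hstep2, ih hk f (Q *ᵥ g)]
      have hmv : ((Q ^ (k - j)) *ᵥ (Q *ᵥ g)) = (Q ^ (k + 1 - j)) *ᵥ g := by
        rw [Matrix.mulVec_mulVec, show k + 1 - j = (k - j) + 1 by omega, pow_succ]
      rw [hmv]
    · have hjk1 : j = k + 1 := by omega
      subst hjk1
      have hsingle := pathsum_single s d Q (k + 1) (by omega)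
        (fun x => f x * g x)
      rw [Nat.sub_self]
      simp only [pow_zero, Matrix.one_mulVec]
      exact hsingle


lemma sum_kernel_osc (R : S → S → ℝ) (q c : ℝ) (hR0 : ∀ x y, 0 ≤ R x y)
    (hR1 : ∀ x, ∑ y, R x y = q) (hc : 0 ≤ c) (g : S → ℝ)
    (hg : ∀ x y, g x - g y ≤ c) (x y : S) :
    (∑ u, R x u * g u) - (∑ v, R y v * g v) ≤ q * c := by
  have hq : 0 ≤ q := by
    rw [← hR1 x]
    exact Finset.sum_nonneg fun u _ => hR0 x u
  rcases eq_or_lt_of_le hq with hq0 | hq0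
  · have hz : ∀ z u : S, R z u = 0 := by
      intro z u
      have hsum : ∑ v, R z v = 0 := by rw [hR1 z, ← hq0]
      exact (Finset.sum_eq_zero_iff_of_nonneg (fun v _ => hR0 z v)).mp hsum u
        (Finset.mem_univ u)
    simp [hz, ← hq0]
  · have key : q * ((∑ u, R x u * g u) - (∑ v, R y v * g v))
        = ∑ u, ∑ v, R x u * R y v * (g u - g v) := by
      rw [mul_sub]
      have h1 : q * ∑ u, R x u * g u = ∑ u, ∑ v, R x u * R y v * g u := by
        rw [Finset.mul_sum]
        refine Finset.sum_congr rfl fun u _ => ?_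
        calc q * (R x u * g u) = (∑ v, R y v) * (R x u * g u) := by rw [hR1 y]
          _ = ∑ v, R x u * R y v * g u := by
              rw [Finset.sum_mul]
              exact Finset.sum_congr rfl fun v _ => by ring
      have h2 : q * ∑ v, R y v * g v = ∑ u, ∑ v, R x u * R y v * g v := by
        calc q * ∑ v, R y v * g v = ∑ v, ∑ u, R x u * R y v * g v := by
              rw [Finset.mul_sum]
              refine Finset.sum_congr rfl fun v _ => ?_
              calc q * (R y v * g v) = (∑ u, R x u) * (R y v * g v) := by rw [hR1 x]
                _ = ∑ u, R x u * R y v * g v := by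
                    rw [Finset.sum_mul]
                    exact Finset.sum_congr rfl fun u _ => by ring
          _ = ∑ u, ∑ v, R x u * R y v * g v := Finset.sum_comm
      rw [h1, h2, ← Finset.sum_sub_distrib]
      refine Finset.sum_congr rfl fun u _ => ?_
      rw [← Finset.sum_sub_distrib]
      exact Finset.sum_congr rfl fun v _ => by ring
    have hbound : ∑ u, ∑ v, R x u * R y v * (g u - g v) ≤ q * (q * c) := by
      refine le_trans (Finset.sum_le_sum fun u _ => Finset.sum_le_sum fun v _ =>
        mul_le_mul_of_nonneg_left (hg u v) (mul_nonneg (hR0 x u) (hR0 y v))) ?_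
      have hrow : ∀ u, ∑ v, R x u * R y v * c = R x u * (q * c) := by
        intro u
        calc ∑ v, R x u * R y v * c = ∑ v, (R x u * c) * R y v := by
              exact Finset.sum_congr rfl fun v _ => by ring
          _ = (R x u * c) * ∑ v, R y v := by rw [← Finset.mul_sum]
          _ = R x u * (q * c) := by rw [hR1 y]; ring
      simp only [hrow]
      rw [← Finset.sum_mul, hR1 x]
  -- conclude
    have := key ▸ hbound
    exact le_of_mul_le_mul_left this hq0

lemma mulVec_osc (R : Matrix S S ℝ) (q : ℝ) (hR0 : ∀ x y, 0 ≤ R x y)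
    (hR1 : ∀ x, ∑ y, R x y = q) (g : S → ℝ) (c : ℝ) (hc : 0 ≤ c)
    (hg : ∀ x y, g x - g y ≤ c) (x y : S) :
    (R *ᵥ g) x - (R *ᵥ g) y ≤ q * c := by
  have hx : ∀ z, (R *ᵥ g) z = ∑ u, R z u * g u := by
    intro z; simp [Matrix.mulVec, dotProduct]
  rw [hx x, hx y]
  exact sum_kernel_osc R q c hR0 hR1 hc g hg x y

lemma cov_abs_le (ρ f g : S → ℝ) (hρ0 : ∀ x, 0 ≤ ρ x) (hρ1 : ∑ x, ρ x = 1)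
    (hf0 : ∀ x, 0 ≤ f x) (hf1 : ∀ x, f x ≤ 1) (c : ℝ) (hc : 0 ≤ c)
    (hg : ∀ x y, g x - g y ≤ c) :
    |(∑ x, ρ x * (f x * g x)) - (∑ x, ρ x * f x) * (∑ x, ρ x * g x)| ≤ c := by
  set gb := ∑ x, ρ x * g x with hgb
  have hconst : ∑ x : S, ρ x * c = c := by rw [← Finset.sum_mul, hρ1, one_mul]
  have hdev : ∀ x, |g x - gb| ≤ c := by
    intro x
    rw [abs_le]
    constructor
    · have h1 : gb - g x = ∑ y, ρ y * (g y - g x) := by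
        rw [hgb]
        have : ∀ y, ρ y * (g y - g x) = ρ y * g y - ρ y * g x := fun y => by ring
        simp only [this, Finset.sum_sub_distrib]
        rw [← Finset.sum_mul, hρ1, one_mul]
      have h2 : ∑ y, ρ y * (g y - g x) ≤ ∑ y, ρ y * c :=
        Finset.sum_le_sum fun y _ => mul_le_mul_of_nonneg_left (hg y x) (hρ0 y)
      rw [hconst] at h2
      linarith
    · have h1 : g x - gb = ∑ y, ρ y * (g x - g y) := by
        rw [hgb]
        have : ∀ y, ρ y * (g x - g y) = ρ y * g x - ρ y * g y := fun y => by ring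
        simp only [this, Finset.sum_sub_distrib]
        rw [← Finset.sum_mul, hρ1, one_mul]
      have h2 : ∑ y, ρ y * (g x - g y) ≤ ∑ y, ρ y * c :=
        Finset.sum_le_sum fun y _ => mul_le_mul_of_nonneg_left (hg x y) (hρ0 y)
      rw [hconst] at h2
      linarith
  have hid : (∑ x, ρ x * (f x * g x)) - (∑ x, ρ x * f x) * gb
      = ∑ x, ρ x * f x * (g x - gb) := by
    rw [Finset.sum_mul, ← Finset.sum_sub_distrib]
    exact Finset.sum_congr rfl fun x _ => by ring
  rw [hid]
  calc |∑ x, ρ x * f x * (g x - gb)| ≤ ∑ x, |ρ x * f x * (g x - gb)| :=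
        Finset.abs_sum_le_sum_abs _ _
    _ ≤ ∑ x, ρ x * c := by
        refine Finset.sum_le_sum fun x _ => ?_
        rw [abs_mul, abs_of_nonneg (mul_nonneg (hρ0 x) (hf0 x))]
        calc ρ x * f x * |g x - gb| ≤ ρ x * 1 * c := by
              refine mul_le_mul ?_ (hdev x) (abs_nonneg _) (by rw [mul_one]; exact hρ0 x)
              exact mul_le_mul_of_nonneg_left (hf1 x) (hρ0 x)
          _ = ρ x * c := by ring
    _ = c := hconst


end Aux

section RealAux

lemma theta_sum_le (m : ℕ) (hm : 0 < m) (p : ℝ) (hp0 : 0 < p) (hp1 : p ≤ 1) (N : ℕ) :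
    ∑ d ∈ Finset.range N, (1 - p) ^ (d / m) ≤ (m : ℝ) / p := by
  have h01 : (0:ℝ) ≤ 1 - p := by linarith
  have hlt : (1:ℝ) - p < 1 := by linarith
  have block : ∀ K : ℕ, ∑ d ∈ Finset.range (m * K), (1 - p) ^ (d / m)
      = (m : ℝ) * ∑ i ∈ Finset.range K, (1 - p) ^ i := by
    intro K
    induction K with
    | zero => simp
    | succ K ih =>
      have hmK : m * (K + 1) = m * K + m := by ring
      have hdisj : Disjoint (Finset.range (m * K))
          ((Finset.range m).map (addLeftEmbedding (m * K))) := by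
        rw [Finset.disjoint_left]
        intro x hx hx'
        obtain ⟨i, hi, rfl⟩ := Finset.mem_map.mp hx'
        have hx2 := Finset.mem_range.mp hx
        simp only [addLeftEmbedding_apply] at hx2
        omega
      rw [hmK, Finset.range_add, Finset.sum_union hdisj, Finset.sum_map, ih,
        Finset.sum_range_succ]
      have hterm : ∀ i ∈ Finset.range m,
          (1 - p) ^ ((addLeftEmbedding (m * K)) i / m) = (1 - p) ^ K := by
        intro i hi
        congr 1
        have hi' := Finset.mem_range.mp hi
        simp only [addLeftEmbedding_apply]
        rw [Nat.mul_add_div hm, Nat.div_eq_of_lt hi']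
        omega
      rw [Finset.sum_congr rfl hterm, Finset.sum_const, Finset.card_range,
        nsmul_eq_mul]
      ring
  have hsub : ∑ d ∈ Finset.range N, (1 - p) ^ (d / m)
      ≤ ∑ d ∈ Finset.range (m * (N / m + 1)), (1 - p) ^ (d / m) := by
    refine Finset.sum_le_sum_of_subset_of_nonneg ?_ (fun d _ _ => pow_nonneg h01 _)
    refine Finset.range_subset_range.mpr ?_
    have h1 := Nat.div_add_mod N m
    have h2 : N % m < m := Nat.mod_lt N hm
    calc N = m * (N / m) + N % m := h1.symm
      _ ≤ m * (N / m) + m := Nat.add_le_add_left (le_of_lt h2) _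
      _ = m * (N / m + 1) := (Nat.mul_succ m (N / m)).symm
  have geo : ∑ i ∈ Finset.range (N / m + 1), (1 - p) ^ i ≤ 1 / p := by
    have hsummable := summable_geometric_of_lt_one h01 hlt
    have h := Summable.sum_le_tsum (Finset.range (N / m + 1))
      (fun i _ => pow_nonneg h01 i) hsummable
    rw [tsum_geometric_of_lt_one h01 hlt] at h
    have : (1:ℝ) - (1 - p) = p := by ring
    rw [this] at h
    rw [one_div]
    exact h
  calc ∑ d ∈ Finset.range N, (1 - p) ^ (d / m)
      ≤ ∑ d ∈ Finset.range (m * (N / m + 1)), (1 - p) ^ (d / m) := hsub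
    _ = (m : ℝ) * ∑ i ∈ Finset.range (N / m + 1), (1 - p) ^ i := block _
    _ ≤ (m : ℝ) * (1 / p) := by
        refine mul_le_mul_of_nonneg_left geo (by positivity)
    _ = (m : ℝ) / p := by ring

lemma double_sum_bound (γ p : ℝ) (m : ℕ) (hm : 0 < m) (hγ0 : 0 < γ) (hγ1 : γ < 1)
    (hp0 : 0 < p) (hp1 : p ≤ 1) (n : ℕ) :
    ∑ j ∈ Finset.range n, ∑ k ∈ Finset.range n,
        γ ^ j * γ ^ k * (1 - p) ^ ((max j k - min j k) / m)
      ≤ 2 * ((m : ℝ) / p) * (1 - γ)⁻¹ := by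
  have h01 : (0:ℝ) ≤ 1 - p := by linarith
  have hγle1 : ∀ i : ℕ, γ ^ i ≤ 1 := fun i => pow_le_one₀ hγ0.le hγ1.le
  set H : ℕ → ℕ → ℝ := fun j k => if j ≤ k then γ ^ k * (1 - p) ^ ((k - j) / m) else 0
    with hH
  have hH0 : ∀ j k, 0 ≤ H j k := by
    intro j k
    rw [hH]
    dsimp only
    split
    · positivity
    · exact le_refl 0
  have hGH : ∀ j k, γ ^ j * γ ^ k * (1 - p) ^ ((max j k - min j k) / m)
      ≤ H j k + H k j := by
    intro j k
    rcases le_total j k with h | h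
    · rw [max_eq_right h, min_eq_left h]
      have h1 : H j k = γ ^ k * (1 - p) ^ ((k - j) / m) := if_pos h
      have h2 : γ ^ j * γ ^ k * (1 - p) ^ ((k - j) / m)
          ≤ γ ^ k * (1 - p) ^ ((k - j) / m) :=
        mul_le_mul_of_nonneg_right
          (mul_le_of_le_one_left (pow_nonneg hγ0.le k) (hγle1 j))
          (pow_nonneg h01 _)
      linarith [hH0 k j, h1 ▸ h2]
    · rw [max_eq_left h, min_eq_right h]
      have h1 : H k j = γ ^ j * (1 - p) ^ ((j - k) / m) := if_pos h
      have h2 : γ ^ j * γ ^ k * (1 - p) ^ ((j - k) / m)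
          ≤ γ ^ j * (1 - p) ^ ((j - k) / m) :=
        mul_le_mul_of_nonneg_right
          (mul_le_of_le_one_right (pow_nonneg hγ0.le j) (hγle1 k))
          (pow_nonneg h01 _)
      linarith [hH0 j k, h1 ▸ h2]
  have hinner : ∀ j, ∑ k ∈ Finset.range n, H j k ≤ γ ^ j * ((m : ℝ) / p) := by
    intro j
    have hfilter : ∑ k ∈ Finset.range n, H j k
        = ∑ k ∈ Finset.Ico j n, γ ^ k * (1 - p) ^ ((k - j) / m) := by
      rw [hH]
      dsimp only
      rw [Finset.sum_ite, Finset.sum_const_zero, add_zero]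
      refine Finset.sum_congr ?_ (fun _ _ => rfl)
      ext k
      simp only [Finset.mem_filter, Finset.mem_range, Finset.mem_Ico]
      omega
    rw [hfilter, Finset.sum_Ico_eq_sum_range]
    have hterm : ∀ d ∈ Finset.range (n - j),
        γ ^ (j + d) * (1 - p) ^ ((j + d - j) / m)
          = γ ^ j * (γ ^ d * (1 - p) ^ (d / m)) := by
      intro d _
      rw [Nat.add_sub_cancel_left, pow_add]
      ring
    rw [Finset.sum_congr rfl hterm, ← Finset.mul_sum]
    refine mul_le_mul_of_nonneg_left ?_ (pow_nonneg hγ0.le j)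
    calc ∑ d ∈ Finset.range (n - j), γ ^ d * (1 - p) ^ (d / m)
        ≤ ∑ d ∈ Finset.range (n - j), (1 - p) ^ (d / m) := by
          refine Finset.sum_le_sum fun d _ => ?_
          exact mul_le_of_le_one_left (pow_nonneg h01 _) (hγle1 d)
      _ ≤ (m : ℝ) / p := theta_sum_le m hm p hp0 hp1 _
  have hgeo : ∑ j ∈ Finset.range n, γ ^ j ≤ (1 - γ)⁻¹ := by
    have hs := summable_geometric_of_lt_one hγ0.le hγ1
    have h := Summable.sum_le_tsum (Finset.range n) (fun i _ => pow_nonneg hγ0.le i) hs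
    rwa [tsum_geometric_of_lt_one hγ0.le hγ1] at h
  calc ∑ j ∈ Finset.range n, ∑ k ∈ Finset.range n,
        γ ^ j * γ ^ k * (1 - p) ^ ((max j k - min j k) / m)
      ≤ ∑ j ∈ Finset.range n, ∑ k ∈ Finset.range n, (H j k + H k j) := by
        exact Finset.sum_le_sum fun j _ => Finset.sum_le_sum fun k _ => hGH j k
    _ = (∑ j ∈ Finset.range n, ∑ k ∈ Finset.range n, H j k)
        + ∑ j ∈ Finset.range n, ∑ k ∈ Finset.range n, H k j := by
        simp [Finset.sum_add_distrib]
    _ = 2 * ∑ j ∈ Finset.range n, ∑ k ∈ Finset.range n, H j k := by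
        rw [Finset.sum_comm (f := fun j k => H k j)]
        ring
    _ ≤ 2 * ∑ j ∈ Finset.range n, γ ^ j * ((m : ℝ) / p) := by
        have := Finset.sum_le_sum fun j (_ : j ∈ Finset.range n) => hinner j
        linarith
    _ = 2 * ((m : ℝ) / p) * ∑ j ∈ Finset.range n, γ ^ j := by
        rw [← Finset.sum_mul]
        ring
    _ ≤ 2 * ((m : ℝ) / p) * (1 - γ)⁻¹ := by
        refine mul_le_mul_of_nonneg_left hgeo ?_
        positivity

end RealAux

/-- variance bound `Ψ^π(s,a) ≤ 20 (m/p)/(1−γ)` for the discounted cumulative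
reward of a policy whose induced kernel is `(m,p)`-Doeblin with `m/p ≤ 1/(1−γ)`.

The Markov chain started from `(s,a)` (i.e. `S₀ = s`, `S₁ ∼ P_{s,a}`, and
`S_{k+1} ∼ P_π(S_k,·)` for `k ≥ 1`) is encoded by its path measure `μ s a` on `ℕ → S`,
characterized through its finite-dimensional cylinder probabilities. -/
theorem variance_cumulative_reward_le
    {S A : Type*} [Fintype S] [Nonempty S] [DecidableEq S] [Fintype A] [Nonempty A]
    [MeasurableSpace S] [MeasurableSingletonClass S]
    -- the MDP data
    (r : S → A → ℝ) (hr0 : ∀ s a, 0 ≤ r s a) (hr1 : ∀ s a, r s a ≤ 1)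
    (P : S → A → S → ℝ) (hP0 : ∀ s a s', 0 ≤ P s a s') (hP1 : ∀ s a, ∑ s', P s a s' = 1)
    (γ : ℝ) (hγ0 : 0 < γ) (hγ1 : γ < 1)
    -- the policy
    (π : S → A)
    -- the (m,p)-Doeblin condition for the induced kernel P_π, with m/p ≤ 1/(1-γ)
    (m : ℕ) (p : ℝ) (hm : 0 < m) (hp0 : 0 < p) (hp1 : p ≤ 1)
    (ψ : S → ℝ) (hψ0 : ∀ s', 0 ≤ ψ s') (hψ1 : ∑ s', ψ s' = 1)
    (hdoeb : ∀ s s', p * ψ s' ≤ ((Matrix.of fun u u' => P u (π u) u') ^ m) s s')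
    (hmp : (m : ℝ) / p ≤ 1 / (1 - γ))
    -- the path measures of the Markov chain started from (s,a)
    (μ : S → A → Measure (ℕ → S)) (hμ : ∀ s a, IsProbabilityMeasure (μ s a))
    (hfdd : ∀ s a (n : ℕ), 1 ≤ n → ∀ w : ℕ → S,
      μ s a {ω | ∀ i ≤ n, ω i = w i} =
        ENNReal.ofReal ((if w 0 = s then (1 : ℝ) else 0) * P s a (w 1) *
          ∏ k ∈ Finset.Ico 1 n, P (w k) (π (w k)) (w (k + 1)))) :
    ∀ s a, variance (fun ω => ∑' k : ℕ, γ ^ k * r (ω k) (π (ω k))) (μ s a) ≤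
      20 * ((m : ℝ) / p) / (1 - γ) := by
  intro s a
  haveI := hμ s a
  have hγ' : (0:ℝ) < 1 - γ := by linarith
  have h01 : (0:ℝ) ≤ 1 - p := by linarith
  set Qm : Matrix S S ℝ := Matrix.of fun u u' => P u (π u) u' with hQmdef
  set rp : S → ℝ := fun x => r x (π x) with hrpdef
  have hrp0 : ∀ x, 0 ≤ rp x := fun x => hr0 x (π x)
  have hrp1 : ∀ x, rp x ≤ 1 := fun x => hr1 x (π x)
  -- stochasticity of powers of Qm
  have hQ0 : ∀ (i : ℕ) (x y : S), 0 ≤ (Qm ^ i) x y := by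
    intro i
    induction i with
    | zero =>
      intro x y
      rw [pow_zero, Matrix.one_apply]
      split <;> norm_num
    | succ i ih =>
      intro x y
      rw [pow_succ, Matrix.mul_apply]
      exact Finset.sum_nonneg fun z _ => mul_nonneg (ih x z) (hP0 z (π z) y)
  have hQ1 : ∀ (i : ℕ) (x : S), ∑ y, (Qm ^ i) x y = 1 := by
    intro i
    induction i with
    | zero =>
      intro x
      simp [Matrix.one_apply]
    | succ i ih =>
      intro x
      simp only [pow_succ, Matrix.mul_apply]
      rw [Finset.sum_comm]
      have hz : ∀ z, ∑ y, (Qm ^ i) x z * Qm z y = (Qm ^ i) x z := by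
        intro z
        rw [← Finset.mul_sum, show (∑ y, Qm z y) = 1 from hP1 z (π z), mul_one]
      rw [Finset.sum_congr rfl fun z _ => hz z]
      exact ih x
  -- oscillation machinery
  have osc_base : ∀ x y, rp x - rp y ≤ 1 := by
    intro x y
    have := hrp0 y
    have := hrp1 x
    linarith
  have osc_doeblin : ∀ (g : S → ℝ) (c : ℝ), 0 ≤ c → (∀ x y, g x - g y ≤ c) →
      ∀ x y, ((Qm ^ m) *ᵥ g) x - ((Qm ^ m) *ᵥ g) y ≤ (1 - p) * c := by
    intro g c hc hg x y
    set R : S → S → ℝ := fun x u => (Qm ^ m) x u - p * ψ u with hR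
    have hR0 : ∀ x u, 0 ≤ R x u := fun x u => sub_nonneg.mpr (hdoeb x u)
    have hR1 : ∀ x, ∑ u, R x u = 1 - p := by
      intro x
      rw [hR]
      simp only
      rw [Finset.sum_sub_distrib, hQ1 m x, ← Finset.mul_sum, hψ1, mul_one]
    have hdiff : ∀ z, ((Qm ^ m) *ᵥ g) z
        = (∑ u, R z u * g u) + ∑ u, (p * ψ u) * g u := by
      intro z
      have h1 : ((Qm ^ m) *ᵥ g) z = ∑ u, (Qm ^ m) z u * g u := by
        simp [Matrix.mulVec, dotProduct]
      rw [h1, ← Finset.sum_add_distrib]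
      refine Finset.sum_congr rfl fun u _ => ?_
      rw [hR]
      ring
    have h := sum_kernel_osc R (1 - p) c hR0 hR1 hc g hg x y
    rw [hdiff x, hdiff y]
    linarith
  have osc_pow_m : ∀ (i : ℕ) (g : S → ℝ) (c : ℝ), 0 ≤ c → (∀ x y, g x - g y ≤ c) →
      ∀ x y, ((Qm ^ (m * i)) *ᵥ g) x - ((Qm ^ (m * i)) *ᵥ g) y ≤ (1 - p) ^ i * c := by
    intro i
    induction i with
    | zero =>
      intro g c hc hg x y
      rw [Nat.mul_zero, pow_zero, Matrix.one_mulVec, pow_zero, one_mul]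
      exact hg x y
    | succ i ih =>
      intro g c hc hg x y
      have hsplit : (Qm ^ (m * (i + 1))) *ᵥ g = (Qm ^ m) *ᵥ ((Qm ^ (m * i)) *ᵥ g) := by
        rw [Matrix.mulVec_mulVec, ← pow_add, show m + m * i = m * (i + 1) by ring]
      rw [hsplit]
      have h2 := osc_doeblin ((Qm ^ (m * i)) *ᵥ g) ((1 - p) ^ i * c)
        (mul_nonneg (pow_nonneg h01 i) hc) (ih g c hc hg) x y
      calc ((Qm ^ m) *ᵥ ((Qm ^ (m * i)) *ᵥ g)) x - ((Qm ^ m) *ᵥ ((Qm ^ (m * i)) *ᵥ g)) y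
          ≤ (1 - p) * ((1 - p) ^ i * c) := h2
        _ = (1 - p) ^ (i + 1) * c := by ring
  have osc_pow : ∀ (dd : ℕ) (x y : S),
      ((Qm ^ dd) *ᵥ rp) x - ((Qm ^ dd) *ᵥ rp) y ≤ (1 - p) ^ (dd / m) := by
    intro dd x y
    have hsplit : (Qm ^ dd) *ᵥ rp = (Qm ^ (dd % m)) *ᵥ ((Qm ^ (m * (dd / m))) *ᵥ rp) := by
      rw [Matrix.mulVec_mulVec, ← pow_add, Nat.mod_add_div dd m]
    rw [hsplit]
    have hin := osc_pow_m (dd / m) rp 1 one_pos.le osc_base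
    have h := mulVec_osc (Qm ^ (dd % m)) 1 (hQ0 (dd % m)) (hQ1 (dd % m))
      ((Qm ^ (m * (dd / m))) *ᵥ rp) ((1 - p) ^ (dd / m) * 1)
      (mul_nonneg (pow_nonneg h01 _) one_pos.le) hin x y
    rw [one_mul, mul_one] at h
    exact h
  -- integral machinery
  have hYm : ∀ k, Measurable fun ω : ℕ → S => rp (ω k) :=
    fun k => (measurable_of_countable rp).comp (measurable_pi_apply k)
  have hcwt_eq : ∀ (n : ℕ), 1 ≤ n → ∀ w : Fin (n + 1) → S,
      ((μ s a) {ω | ∀ i ≤ n, ω i = extw n w i}).toReal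
        = cwt s (P s a) (fun u u' => Qm u u') n (extw n w) := by
    intro n hn w
    rw [hfdd s a n hn (extw n w)]
    exact ENNReal.toReal_ofReal
      (cwt_nonneg s (fun x => hP0 s a x) (fun x y => hP0 x (π x) y) n (extw n w))
  have KE : ∀ (n : ℕ), 1 ≤ n → ∀ G : (ℕ → S) → ℝ, Measurable G →
      (∀ ω ω' : ℕ → S, (∀ i ≤ n, ω i = ω' i) → G ω = G ω') →
      ∫ ω, G ω ∂(μ s a) = ∑ w : Fin (n + 1) → S,
        cwt s (P s a) (fun u u' => Qm u u') n (extw n w) * G (extw n w) := by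
    intro n hn G hGm hGd
    rw [integral_eq_sum (μ s a) n G hGm hGd]
    exact Finset.sum_congr rfl fun w _ => by rw [hcwt_eq n hn w]
  set EY : ℕ → ℝ := fun k => ∫ ω, rp (ω k) ∂(μ s a) with hEYdef
  set EYY : ℕ → ℕ → ℝ := fun j k => ∫ ω, rp (ω j) * rp (ω k) ∂(μ s a) with hEYYdef
  have hYint : ∀ k, Integrable (fun ω : ℕ → S => rp (ω k)) (μ s a) := fun k =>
    (integrable_const 1).mono' (hYm k).aestronglyMeasurable
      (Filter.Eventually.of_forall fun ω => by
        rw [Real.norm_eq_abs, abs_of_nonneg (hrp0 _)]; exact hrp1 _)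
  have hEYnn : ∀ k, 0 ≤ EY k := fun k => integral_nonneg fun ω => hrp0 _
  have hEYle : ∀ k, EY k ≤ 1 := by
    intro k
    calc EY k ≤ ∫ _ω, (1:ℝ) ∂(μ s a) :=
          integral_mono (hYint k) (integrable_const 1) (fun ω => hrp1 _)
      _ = 1 := by simp
  have hEYYnn : ∀ j k, 0 ≤ EYY j k := fun j k =>
    integral_nonneg fun ω => mul_nonneg (hrp0 _) (hrp0 _)
  have hEYYle : ∀ j k, EYY j k ≤ 1 := by
    intro j k
    have hint : Integrable (fun ω : ℕ → S => rp (ω j) * rp (ω k)) (μ s a) :=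
      (integrable_const 1).mono' ((hYm j).mul (hYm k)).aestronglyMeasurable
        (Filter.Eventually.of_forall fun ω => by
          rw [Real.norm_eq_abs, abs_of_nonneg (mul_nonneg (hrp0 _) (hrp0 _))]
          exact mul_le_one₀ (hrp1 _) (hrp0 _) (hrp1 _))
    calc EYY j k ≤ ∫ _ω, (1:ℝ) ∂(μ s a) :=
          integral_mono hint (integrable_const 1)
            (fun ω => mul_le_one₀ (hrp1 _) (hrp0 _) (hrp1 _))
      _ = 1 := by simp
  -- formulas for the expectations
  have hEYf : ∀ k, 1 ≤ k → EY k = ∑ y, P s a y * ((Qm ^ (k - 1)) *ᵥ rp) y := by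
    intro k hk
    rw [hEYdef]
    simp only
    rw [KE k hk (fun ω => rp (ω k)) (hYm k)
      (fun ω ω' h => by show rp (ω k) = rp (ω' k); rw [h k le_rfl])]
    exact pathsum_single s (P s a) Qm k hk rp
  have hEYYf : ∀ j k, 1 ≤ j → j ≤ k → EYY j k
      = ∑ y, P s a y * ((Qm ^ (j - 1)) *ᵥ fun x => rp x * ((Qm ^ (k - j)) *ᵥ rp) x) y := by
    intro j k hj hjk
    rw [hEYYdef]
    simp only
    rw [KE k (le_trans hj hjk) (fun ω => rp (ω j) * rp (ω k)) ((hYm j).mul (hYm k))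
      (fun ω ω' h => by
        show rp (ω j) * rp (ω k) = rp (ω' j) * rp (ω' k)
        rw [h j hjk, h k le_rfl])]
    exact pathsum_pair s (P s a) Qm j hj k hjk rp rp
  -- zero-index expectations
  have hzero : ∀ (n : ℕ), 1 ≤ n → ∀ G : (ℕ → S) → ℝ, Measurable G →
      (∀ ω ω' : ℕ → S, (∀ i ≤ n, ω i = ω' i) → G ω = G ω') →
      ∫ ω, rp (ω 0) * G ω ∂(μ s a) = rp s * ∫ ω, G ω ∂(μ s a) := by
    intro n hn G hGm hGd
    rw [KE n hn (fun ω => rp (ω 0) * G ω) ((hYm 0).mul hGm)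
      (fun ω ω' h => by
        show rp (ω 0) * G ω = rp (ω' 0) * G ω'
        rw [h 0 (Nat.zero_le n), hGd ω ω' h]),
      KE n hn G hGm hGd, Finset.mul_sum]
    refine Finset.sum_congr rfl fun w _ => ?_
    by_cases h0 : extw n w 0 = s
    · rw [h0]
      ring
    · have hc0 : cwt s (P s a) (fun u u' => Qm u u') n (extw n w) = 0 := by
        unfold cwt
        rw [if_neg h0]
        ring
      rw [hc0]
      ring
  have hEY0v : EY 0 = rp s := by
    have h := hzero 1 le_rfl (fun _ => (1:ℝ)) measurable_const (fun _ _ _ => rfl)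
    simp only [mul_one] at h
    rw [hEYdef]
    simp only
    rw [h]
    simp
  have hEYY0k : ∀ k, EYY 0 k = EY 0 * EY k := by
    intro k
    have h := hzero (k + 1) (Nat.succ_le_succ (Nat.zero_le k)) (fun ω => rp (ω k))
      (hYm k) (fun ω ω' hh => by
        show rp (ω k) = rp (ω' k); rw [hh k (Nat.le_succ k)])
    rw [hEYYdef]
    simp only
    rw [h, hEY0v]
  have hEYYcomm : ∀ j k, EYY j k = EYY k j := by
    intro j k
    rw [hEYYdef]
    simp only
    have : (fun ω : ℕ → S => rp (ω j) * rp (ω k)) = fun ω => rp (ω k) * rp (ω j) :=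
      funext fun ω => mul_comm _ _
    rw [this]
  -- covariance bound
  have covb' : ∀ j k, 1 ≤ j → j ≤ k →
      |EYY j k - EY j * EY k| ≤ (1 - p) ^ ((k - j) / m) := by
    intro j k hj hjk
    set ρ : S → ℝ := fun x => ∑ x₁, P s a x₁ * (Qm ^ (j - 1)) x₁ x with hρdef
    have hρ0 : ∀ x, 0 ≤ ρ x := fun x =>
      Finset.sum_nonneg fun x₁ _ => mul_nonneg (hP0 s a x₁) (hQ0 (j - 1) x₁ x)
    have hρ1 : ∑ x, ρ x = 1 := by
      rw [hρdef]
      simp only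
      rw [Finset.sum_comm]
      calc ∑ x₁, ∑ x, P s a x₁ * (Qm ^ (j - 1)) x₁ x
          = ∑ x₁, P s a x₁ * ∑ x, (Qm ^ (j - 1)) x₁ x := by
            exact Finset.sum_congr rfl fun x₁ _ => (Finset.mul_sum _ _ _).symm
        _ = ∑ x₁, P s a x₁ := by
            refine Finset.sum_congr rfl fun x₁ _ => ?_
            rw [hQ1 (j - 1) x₁, mul_one]
        _ = 1 := hP1 s a
    have htrans : ∀ h : S → ℝ,
        ∑ y, P s a y * ((Qm ^ (j - 1)) *ᵥ h) y = ∑ x, ρ x * h x := by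
      intro h
      calc ∑ y, P s a y * ((Qm ^ (j - 1)) *ᵥ h) y
          = ∑ y, ∑ x, P s a y * ((Qm ^ (j - 1)) y x * h x) := by
            refine Finset.sum_congr rfl fun y _ => ?_
            rw [show ((Qm ^ (j - 1)) *ᵥ h) y = ∑ x, (Qm ^ (j - 1)) y x * h x from by
              simp [Matrix.mulVec, dotProduct], Finset.mul_sum]
        _ = ∑ x, ∑ y, P s a y * ((Qm ^ (j - 1)) y x * h x) := Finset.sum_comm
        _ = ∑ x, ρ x * h x := by
            refine Finset.sum_congr rfl fun x _ => ?_
            rw [hρdef]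
            simp only
            rw [Finset.sum_mul]
            exact Finset.sum_congr rfl fun y _ => by ring
    have hEk : EY k = ∑ x, ρ x * ((Qm ^ (k - j)) *ᵥ rp) x := by
      rw [hEYf k (le_trans hj hjk)]
      have hpow : (Qm ^ (k - 1)) *ᵥ rp = (Qm ^ (j - 1)) *ᵥ ((Qm ^ (k - j)) *ᵥ rp) := by
        rw [Matrix.mulVec_mulVec, ← pow_add, show (j - 1) + (k - j) = k - 1 by omega]
      rw [hpow]
      exact htrans _
    have hEj : EY j = ∑ x, ρ x * rp x := by
      rw [hEYf j hj]
      exact htrans rp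
    have hEjk : EYY j k = ∑ x, ρ x * (rp x * ((Qm ^ (k - j)) *ᵥ rp) x) := by
      rw [hEYYf j k hj hjk]
      exact htrans _
    rw [hEjk, hEj, hEk]
    exact cov_abs_le ρ rp ((Qm ^ (k - j)) *ᵥ rp) hρ0 hρ1 hrp0 hrp1 _
      (pow_nonneg h01 _) (fun x y => osc_pow (k - j) x y)
  have covb : ∀ j k, |EYY j k - EY j * EY k|
      ≤ (1 - p) ^ ((max j k - min j k) / m) := by
    intro j k
    rcases Nat.eq_zero_or_pos j with hj | hj
    · subst hj
      rw [hEYY0k k]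
      simpa using pow_nonneg h01 ((max 0 k - min 0 k) / m)
    rcases Nat.eq_zero_or_pos k with hk | hk
    · subst hk
      rw [hEYYcomm j 0, hEYY0k j, mul_comm (EY 0) (EY j)]
      simpa using pow_nonneg h01 ((max j 0 - min j 0) / m)
    rcases le_total j k with h | h
    · rw [max_eq_right h, min_eq_left h]
      exact covb' j k hj h
    · rw [max_eq_left h, min_eq_right h]
      have hres := covb' k j hk h
      rw [hEYYcomm j k, mul_comm (EY j) (EY k)]
      exact hres
  -- the discounted cumulative reward
  set X : (ℕ → S) → ℝ := fun ω => ∑' k, γ ^ k * rp (ω k) with hXdef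
  have hsgeo : Summable (fun k : ℕ => γ ^ k) := summable_geometric_of_lt_one hγ0.le hγ1
  have hterm_nn : ∀ (ω : ℕ → S) (k : ℕ), 0 ≤ γ ^ k * rp (ω k) :=
    fun ω k => mul_nonneg (pow_nonneg hγ0.le k) (hrp0 _)
  have hterm_le : ∀ (ω : ℕ → S) (k : ℕ), γ ^ k * rp (ω k) ≤ γ ^ k :=
    fun ω k => mul_le_of_le_one_right (pow_nonneg hγ0.le k) (hrp1 _)
  have hsum : ∀ ω : ℕ → S, Summable fun k => γ ^ k * rp (ω k) := fun ω =>
    Summable.of_nonneg_of_le (hterm_nn ω) (hterm_le ω) hsgeo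
  have hXm : Measurable X := by
    refine measurable_of_tendsto_metrizable'
      (f := fun N (ω : ℕ → S) => ∑ k ∈ Finset.range N, γ ^ k * rp (ω k))
      Filter.atTop
      (fun N => Finset.measurable_sum _ fun k _ => measurable_const.mul (hYm k)) ?_
    rw [tendsto_pi_nhds]
    intro ω
    exact (hsum ω).hasSum.tendsto_sum_nat
  have hXbd : ∀ ω, ‖X ω‖ ≤ (1 - γ)⁻¹ := by
    intro ω
    rw [Real.norm_eq_abs, abs_of_nonneg (tsum_nonneg (hterm_nn ω))]
    calc X ω ≤ ∑' k, γ ^ k := Summable.tsum_le_tsum (hterm_le ω) (hsum ω) hsgeo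
      _ = (1 - γ)⁻¹ := tsum_geometric_of_lt_one hγ0.le hγ1
  have hXmem : MemLp X 2 (μ s a) :=
    MemLp.of_bound hXm.aestronglyMeasurable _ (Filter.Eventually.of_forall hXbd)
  -- first moment
  have hEX : ∫ ω, X ω ∂(μ s a) = ∑' k, γ ^ k * EY k := by
    have hb : ∑' k, ∫⁻ ω, ‖γ ^ k * rp (ω k)‖₊ ∂(μ s a) ≠ ⊤ := by
      have hbk : ∀ k, ∫⁻ ω, ‖γ ^ k * rp (ω k)‖₊ ∂(μ s a) ≤ ENNReal.ofReal (γ ^ k) := by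
        intro k
        calc ∫⁻ ω, ‖γ ^ k * rp (ω k)‖₊ ∂(μ s a)
            ≤ ∫⁻ _ω, ENNReal.ofReal (γ ^ k) ∂(μ s a) := by
              refine lintegral_mono fun ω => ?_
              rw [← enorm_eq_nnnorm, ← ofReal_norm]
              refine ENNReal.ofReal_le_ofReal ?_
              rw [Real.norm_eq_abs, abs_of_nonneg (hterm_nn ω k)]
              exact hterm_le ω k
          _ = ENNReal.ofReal (γ ^ k) := by rw [lintegral_const, measure_univ, mul_one]
      refine ne_of_lt (lt_of_le_of_lt (ENNReal.tsum_le_tsum hbk) ?_)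
      rw [← ENNReal.ofReal_tsum_of_nonneg (fun k => pow_nonneg hγ0.le k) hsgeo]
      exact ENNReal.ofReal_lt_top
    rw [hXdef]
    simp only
    rw [integral_tsum (f := fun k (ω : ℕ → S) => γ ^ k * rp (ω k)) (fun k => (measurable_const.mul (hYm k)).aestronglyMeasurable) hb]
    exact tsum_congr fun k => by rw [integral_const_mul]
  -- second moment
  have hX2 : (fun ω => (X ω) ^ 2) = fun ω =>
      ∑' jk : ℕ × ℕ, (γ ^ jk.1 * γ ^ jk.2) * (rp (ω jk.1) * rp (ω jk.2)) := by
    funext ω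
    have hn : Summable fun k => ‖γ ^ k * rp (ω k)‖ := by
      refine Summable.of_nonneg_of_le (fun k => norm_nonneg _) (fun k => ?_) hsgeo
      rw [Real.norm_eq_abs, abs_of_nonneg (hterm_nn ω k)]
      exact hterm_le ω k
    rw [sq, tsum_mul_tsum_of_summable_norm hn hn]
    exact tsum_congr fun jk => by ring
  have hsumpair : Summable (fun jk : ℕ × ℕ => γ ^ jk.1 * γ ^ jk.2) :=
    hsgeo.mul_of_nonneg hsgeo (fun k => pow_nonneg hγ0.le k)
      (fun k => pow_nonneg hγ0.le k)
  have hEX2 : ∫ ω, (X ω) ^ 2 ∂(μ s a)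
      = ∑' jk : ℕ × ℕ, (γ ^ jk.1 * γ ^ jk.2) * EYY jk.1 jk.2 := by
    have hmeas : ∀ jk : ℕ × ℕ, AEStronglyMeasurable
        (fun ω : ℕ → S => (γ ^ jk.1 * γ ^ jk.2) * (rp (ω jk.1) * rp (ω jk.2))) (μ s a) :=
      fun jk => (measurable_const.mul ((hYm jk.1).mul (hYm jk.2))).aestronglyMeasurable
    have hb : ∑' jk : ℕ × ℕ, ∫⁻ ω, ‖(γ ^ jk.1 * γ ^ jk.2) *
        (rp (ω jk.1) * rp (ω jk.2))‖₊ ∂(μ s a) ≠ ⊤ := by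
      have hbk : ∀ jk : ℕ × ℕ, ∫⁻ ω, ‖(γ ^ jk.1 * γ ^ jk.2) *
          (rp (ω jk.1) * rp (ω jk.2))‖₊ ∂(μ s a)
            ≤ ENNReal.ofReal (γ ^ jk.1 * γ ^ jk.2) := by
        intro jk
        have hnn : ∀ ω : ℕ → S, 0 ≤ (γ ^ jk.1 * γ ^ jk.2) *
            (rp (ω jk.1) * rp (ω jk.2)) := fun ω =>
          mul_nonneg (mul_nonneg (pow_nonneg hγ0.le _) (pow_nonneg hγ0.le _))
            (mul_nonneg (hrp0 _) (hrp0 _))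
        have hle : ∀ ω : ℕ → S, (γ ^ jk.1 * γ ^ jk.2) *
            (rp (ω jk.1) * rp (ω jk.2)) ≤ γ ^ jk.1 * γ ^ jk.2 := fun ω =>
          mul_le_of_le_one_right
            (mul_nonneg (pow_nonneg hγ0.le _) (pow_nonneg hγ0.le _))
            (mul_le_one₀ (hrp1 _) (hrp0 _) (hrp1 _))
        calc ∫⁻ ω, ‖(γ ^ jk.1 * γ ^ jk.2) * (rp (ω jk.1) * rp (ω jk.2))‖₊ ∂(μ s a)
            ≤ ∫⁻ _ω, ENNReal.ofReal (γ ^ jk.1 * γ ^ jk.2) ∂(μ s a) := by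
              refine lintegral_mono fun ω => ?_
              rw [← enorm_eq_nnnorm, ← ofReal_norm]
              refine ENNReal.ofReal_le_ofReal ?_
              rw [Real.norm_eq_abs, abs_of_nonneg (hnn ω)]
              exact hle ω
          _ = ENNReal.ofReal (γ ^ jk.1 * γ ^ jk.2) := by
              rw [lintegral_const, measure_univ, mul_one]
      refine ne_of_lt (lt_of_le_of_lt (ENNReal.tsum_le_tsum hbk) ?_)
      rw [← ENNReal.ofReal_tsum_of_nonneg
        (fun jk => mul_nonneg (pow_nonneg hγ0.le _) (pow_nonneg hγ0.le _)) hsumpair]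
      exact ENNReal.ofReal_lt_top
    calc ∫ ω, (X ω) ^ 2 ∂(μ s a)
        = ∫ ω, ∑' jk : ℕ × ℕ, (γ ^ jk.1 * γ ^ jk.2) *
            (rp (ω jk.1) * rp (ω jk.2)) ∂(μ s a) := by rw [← hX2]
      _ = ∑' jk : ℕ × ℕ, ∫ ω, (γ ^ jk.1 * γ ^ jk.2) *
            (rp (ω jk.1) * rp (ω jk.2)) ∂(μ s a) := integral_tsum hmeas hb
      _ = ∑' jk : ℕ × ℕ, (γ ^ jk.1 * γ ^ jk.2) * EYY jk.1 jk.2 :=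
          tsum_congr fun jk => by rw [integral_const_mul]
  -- square of the first moment
  have hEXsq : (∑' k, γ ^ k * EY k) ^ 2
      = ∑' jk : ℕ × ℕ, (γ ^ jk.1 * γ ^ jk.2) * (EY jk.1 * EY jk.2) := by
    have hn : Summable fun k => ‖γ ^ k * EY k‖ := by
      refine Summable.of_nonneg_of_le (fun k => norm_nonneg _) (fun k => ?_) hsgeo
      rw [Real.norm_eq_abs, abs_of_nonneg (mul_nonneg (pow_nonneg hγ0.le k) (hEYnn k))]
      exact mul_le_of_le_one_right (pow_nonneg hγ0.le k) (hEYle k)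
    rw [sq, tsum_mul_tsum_of_summable_norm hn hn]
    exact tsum_congr fun jk => by ring
  -- summability of both pair families
  have hS1 : Summable (fun jk : ℕ × ℕ => (γ ^ jk.1 * γ ^ jk.2) * EYY jk.1 jk.2) := by
    refine Summable.of_nonneg_of_le (fun jk => mul_nonneg
      (mul_nonneg (pow_nonneg hγ0.le _) (pow_nonneg hγ0.le _)) (hEYYnn _ _))
      (fun jk => ?_) hsumpair
    exact mul_le_of_le_one_right
      (mul_nonneg (pow_nonneg hγ0.le _) (pow_nonneg hγ0.le _)) (hEYYle _ _)
  have hS2 : Summable (fun jk : ℕ × ℕ => (γ ^ jk.1 * γ ^ jk.2) * (EY jk.1 * EY jk.2)) := by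
    refine Summable.of_nonneg_of_le (fun jk => mul_nonneg
      (mul_nonneg (pow_nonneg hγ0.le _) (pow_nonneg hγ0.le _))
      (mul_nonneg (hEYnn _) (hEYnn _)))
      (fun jk => ?_) hsumpair
    exact mul_le_of_le_one_right
      (mul_nonneg (pow_nonneg hγ0.le _) (pow_nonneg hγ0.le _))
      (mul_le_one₀ (hEYle _) (hEYnn _) (hEYle _))
  -- variance as a sum of covariances
  have hvar : variance X (μ s a)
      = ∑' jk : ℕ × ℕ, (γ ^ jk.1 * γ ^ jk.2) * (EYY jk.1 jk.2 - EY jk.1 * EY jk.2) := by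
    rw [variance_eq_sub hXmem]
    have hXsq : ∫ ω, (X ^ 2) ω ∂(μ s a) = ∫ ω, (X ω) ^ 2 ∂(μ s a) := rfl
    rw [hXsq, hEX2, hEX, hEXsq, ← Summable.tsum_sub hS1 hS2]
    exact tsum_congr fun jk => by ring
  -- final bound
  have hSsub : Summable (fun jk : ℕ × ℕ =>
      (γ ^ jk.1 * γ ^ jk.2) * (EYY jk.1 jk.2 - EY jk.1 * EY jk.2)) :=
    (hS1.sub hS2).congr fun jk => by ring
  have hG : Summable (fun jk : ℕ × ℕ =>
      γ ^ jk.1 * γ ^ jk.2 * (1 - p) ^ ((max jk.1 jk.2 - min jk.1 jk.2) / m)) := by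
    refine Summable.of_nonneg_of_le (fun jk => mul_nonneg
      (mul_nonneg (pow_nonneg hγ0.le _) (pow_nonneg hγ0.le _)) (pow_nonneg h01 _))
      (fun jk => ?_) hsumpair
    exact mul_le_of_le_one_right
      (mul_nonneg (pow_nonneg hγ0.le _) (pow_nonneg hγ0.le _))
      (pow_le_one₀ h01 (by linarith))
  have hbound : variance X (μ s a) ≤ 2 * ((m : ℝ) / p) * (1 - γ)⁻¹ := by
    rw [hvar]
    calc ∑' jk : ℕ × ℕ, (γ ^ jk.1 * γ ^ jk.2) * (EYY jk.1 jk.2 - EY jk.1 * EY jk.2)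
        ≤ ∑' jk : ℕ × ℕ,
            γ ^ jk.1 * γ ^ jk.2 * (1 - p) ^ ((max jk.1 jk.2 - min jk.1 jk.2) / m) := by
          refine Summable.tsum_le_tsum (fun jk => ?_) hSsub hG
          have h1 : (γ ^ jk.1 * γ ^ jk.2) * (EYY jk.1 jk.2 - EY jk.1 * EY jk.2)
              ≤ (γ ^ jk.1 * γ ^ jk.2) * |EYY jk.1 jk.2 - EY jk.1 * EY jk.2| :=
            mul_le_mul_of_nonneg_left (le_abs_self _)
              (mul_nonneg (pow_nonneg hγ0.le _) (pow_nonneg hγ0.le _))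
          have h2 : (γ ^ jk.1 * γ ^ jk.2) * |EYY jk.1 jk.2 - EY jk.1 * EY jk.2|
              ≤ (γ ^ jk.1 * γ ^ jk.2) * (1 - p) ^ ((max jk.1 jk.2 - min jk.1 jk.2) / m) :=
            mul_le_mul_of_nonneg_left (covb jk.1 jk.2)
              (mul_nonneg (pow_nonneg hγ0.le _) (pow_nonneg hγ0.le _))
          linarith
      _ ≤ 2 * ((m : ℝ) / p) * (1 - γ)⁻¹ := by
          refine Summable.tsum_le_of_sum_le hG fun u => ?_
          set n : ℕ := (u.sup fun jk : ℕ × ℕ => max jk.1 jk.2) + 1 with hn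
          have hsubset : u ⊆ Finset.range n ×ˢ Finset.range n := by
            intro jk hjk
            have hle := Finset.le_sup (f := fun jk : ℕ × ℕ => max jk.1 jk.2) hjk
            rw [Finset.mem_product, Finset.mem_range, Finset.mem_range]
            have h1 := le_trans (le_max_left jk.1 jk.2) hle
            have h2 := le_trans (le_max_right jk.1 jk.2) hle
            constructor <;> omega
          calc ∑ jk ∈ u, γ ^ jk.1 * γ ^ jk.2 * (1 - p) ^ ((max jk.1 jk.2 - min jk.1 jk.2) / m)
              ≤ ∑ jk ∈ Finset.range n ×ˢ Finset.range n,
                  γ ^ jk.1 * γ ^ jk.2 * (1 - p) ^ ((max jk.1 jk.2 - min jk.1 jk.2) / m) :=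
                Finset.sum_le_sum_of_subset_of_nonneg hsubset (fun jk _ _ => mul_nonneg
                  (mul_nonneg (pow_nonneg hγ0.le _) (pow_nonneg hγ0.le _))
                  (pow_nonneg h01 _))
            _ = ∑ j ∈ Finset.range n, ∑ k ∈ Finset.range n,
                  γ ^ j * γ ^ k * (1 - p) ^ ((max j k - min j k) / m) := by
                rw [Finset.sum_product]
            _ ≤ 2 * ((m : ℝ) / p) * (1 - γ)⁻¹ :=
                double_sum_bound γ p m hm hγ0 hγ1 hp0 hp1 n
  -- conclude
  have hmp0 : (0:ℝ) ≤ (m : ℝ) / p := div_nonneg (Nat.cast_nonneg m) hp0.le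
  have hfinal : 2 * ((m : ℝ) / p) * (1 - γ)⁻¹ ≤ 20 * ((m : ℝ) / p) / (1 - γ) := by
    rw [div_eq_mul_inv]
    have h2 : (2:ℝ) * ((m : ℝ) / p) ≤ 20 * ((m : ℝ) / p) := by linarith
    exact mul_le_mul_of_nonneg_right h2 (inv_nonneg.mpr hγ'.le)
  exact le_trans hbound hfinal
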